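/- Let P be a probability measure and for r ≥ 0 define B_r(P) as the set of probability measures Q with Q ≪ P and D_{χ²}(Q‖P) ≤ r. If P is a mixture ∑_{k=1}^K π_k P_k with all π_k ≥ α > 0, then for any bounded measurable loss ℓ ≥ 0, max_{k} E_{P_k}[ℓ] ≤ sup_{Q ∈ B_{r_max}(P)} E_Q[ℓ], where r_max = (1/α − 1)². -/

import Mathlib

open MeasureTheory

/-- If `P = ∑ k, π k • P k` is a mixture with all weights `π k ≥ α > 0`, then for any
bounded measurable nonnegative loss `ℓ`,
`max_k E_{P_k}[ℓ] ≤ sup_{Q : Q ≪ P, D_{χ²}(Q‖P) ≤ (1/α−1)²} E_Q[ℓ]`. -/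
theorem max_group_risk_le_dro_risk
    {Ω : Type*} [MeasurableSpace Ω] {K : ℕ}
    (P : Measure Ω) (Pk : Fin K → Measure Ω)
    [IsProbabilityMeasure P] [∀ k, IsProbabilityMeasure (Pk k)]
    (π : Fin K → ℝ) (hπ : ∀ k, π k ∈ Set.Ioo (0 : ℝ) 1)
    (hsum : ∑ k, π k = 1)
    (hmix : P = Measure.sum (fun k => (ENNReal.ofReal (π k)) • Pk k))
    (α : ℝ) (hα : 0 < α) (hαπ : ∀ k, α ≤ π k)
    (ℓ : Ω → ℝ) (hℓmeas : Measurable ℓ) (hℓ0 : ∀ x, 0 ≤ ℓ x)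
    (M : ℝ) (hℓM : ∀ x, ℓ x ≤ M) :
    ∀ k, ∫ x, ℓ x ∂(Pk k) ≤
      ⨆ Q : {Q : Measure Ω // IsProbabilityMeasure Q ∧ Q ≪ P ∧
        ∫ x, ((Q.rnDeriv P x).toReal - 1) ^ 2 ∂P ≤ (1 / α - 1) ^ 2},
        ∫ x, ℓ x ∂(Q : Measure Ω) := by
  intro k
  -- α ≤ 1/2
  have hα2 : α ≤ 1 / 2 := by
    rcases lt_or_ge K 2 with h | h
    · interval_cases K
      · exact absurd k.2 (by simp)
      · have h1 : π 0 = 1 := by simpa [Fin.sum_univ_one] using hsum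
        exact absurd h1 (ne_of_lt (hπ 0).2)
    · obtain ⟨j, hj⟩ : ∃ j : Fin K, j ≠ k :=
        Fintype.exists_ne_of_one_lt_card (by rw [Fintype.card_fin]; omega) k
      have hpair : π j + π k ≤ ∑ i, π i := by
        have := Finset.sum_le_sum_of_subset_of_nonneg
          (Finset.subset_univ ({j, k} : Finset (Fin K)))
          (fun i _ _ => le_of_lt (hπ i).1)
        rwa [Finset.sum_pair hj] at this
      rw [hsum] at hpair
      linarith [hαπ j, hαπ k]
  set c := ENNReal.ofReal (π k) with hc
  have hπk0 : (0:ℝ) < π k := (hπ k).1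
  have hc0 : c ≠ 0 := by simp [hc, ENNReal.ofReal_eq_zero, not_le, hπk0]
  have hcT : c ≠ ⊤ := ENNReal.ofReal_ne_top
  have hle : c • Pk k ≤ P := by rw [hmix]; exact Measure.le_sum _ k
  have hac : Pk k ≪ P :=
    (Measure.absolutelyContinuous_smul hc0).trans (Measure.absolutelyContinuous_of_le hle)
  -- bound on rnDeriv
  have hbd : ∀ᵐ x ∂P, ((Pk k).rnDeriv P x).toReal ≤ 1 / π k := by
    have h1 : (c • Pk k).rnDeriv P ≤ᵐ[P] 1 := Measure.rnDeriv_le_one_of_le hle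
    have h2 : (c • Pk k).rnDeriv P =ᵐ[P] c • (Pk k).rnDeriv P :=
      Measure.rnDeriv_smul_left_of_ne_top (Pk k) P hcT
    filter_upwards [h1, h2] with x hx1 hx2
    rw [hx2] at hx1
    have hx1' : (Pk k).rnDeriv P x * c ≤ 1 := by
      rw [mul_comm]; simpa using hx1
    have hxinv : (Pk k).rnDeriv P x ≤ c⁻¹ := ENNReal.le_inv_iff_mul_le.mpr hx1'
    have := ENNReal.toReal_mono (by simp [hc0]) hxinv
    rwa [ENNReal.toReal_inv, hc, ENNReal.toReal_ofReal hπk0.le, inv_eq_one_div] at this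
  -- chi-square bound
  have hchi : ∫ x, (((Pk k).rnDeriv P x).toReal - 1) ^ 2 ∂P ≤ (1 / α - 1) ^ 2 := by
    have hae : ∀ᵐ x ∂P, ‖(((Pk k).rnDeriv P x).toReal - 1) ^ 2‖ ≤ (1 / α - 1) ^ 2 := by
      filter_upwards [hbd] with x hx
      rw [Real.norm_eq_abs, abs_of_nonneg (sq_nonneg _)]
      have h0 : (0:ℝ) ≤ ((Pk k).rnDeriv P x).toReal := ENNReal.toReal_nonneg
      have hinvα : (2:ℝ) ≤ 1 / α := by rw [le_div_iff₀ hα]; linarith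
      have h2 : 1 / π k ≤ 1 / α := one_div_le_one_div_of_le hα (hαπ k)
      exact sq_le_sq' (by linarith) (by linarith)
    calc ∫ x, (((Pk k).rnDeriv P x).toReal - 1) ^ 2 ∂P
        ≤ ‖∫ x, (((Pk k).rnDeriv P x).toReal - 1) ^ 2 ∂P‖ := le_abs_self _
      _ ≤ (1 / α - 1) ^ 2 * (P Set.univ).toReal := norm_integral_le_of_norm_le_const hae
      _ = (1 / α - 1) ^ 2 := by simp
  -- bounded above
  have hbdd : BddAbove (Set.range fun Q : {Q : Measure Ω // IsProbabilityMeasure Q ∧ Q ≪ P ∧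
      ∫ x, ((Q.rnDeriv P x).toReal - 1) ^ 2 ∂P ≤ (1 / α - 1) ^ 2} =>
      ∫ x, ℓ x ∂(Q : Measure Ω)) := by
    refine ⟨M, ?_⟩
    rintro y ⟨⟨Q, hQ, _, _⟩, rfl⟩
    haveI := hQ
    calc ∫ x, ℓ x ∂Q ≤ ‖∫ x, ℓ x ∂Q‖ := le_abs_self _
      _ ≤ M * (Q Set.univ).toReal := norm_integral_le_of_norm_le_const
          (Filter.Eventually.of_forall fun x => by
            rw [Real.norm_eq_abs, abs_of_nonneg (hℓ0 x)]; exact hℓM x)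
      _ = M := by simp
  exact le_ciSup hbdd ⟨Pk k, inferInstance, hac, hchi⟩
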